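/- arXiv:1305.4971 — 3 statements merged into one kernel-verified Lean document; each statement's English description precedes it below -/
import Mathlib

section
/- For every integer s ≥ 0 and every integer k lying in J_s (i.e. 2^(Q(s)) + Q(s+1) − Q(s) + Ξ ≤ k < 2^(Q(s+1))), one has N(k) = Q(s+1) + Ξ·(s+1) and B(k) = 2(s+1). -/
open scoped Classical ENNReal
open Real Set Filter

/-- The quadratic function `Q(s) = q·s²`. -/
noncomputable def Qf (q : ℤ) (s : ℝ) : ℝ := (q : ℝ) * s ^ 2

/-- The half-open interval `I_s = [2^(Q(s)), 2^(Q(s)) + Q(s+1) − Q(s) + Ξ)`. -/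
noncomputable def Iset (q Ξ : ℤ) (s : ℝ) : Set ℝ :=
  Set.Ico ((2 : ℝ) ^ (Qf q s)) ((2 : ℝ) ^ (Qf q s) + Qf q (s + 1) - Qf q s + (Ξ : ℝ))

/-- The half-open interval `J_s = [2^(Q(s)) + Q(s+1) − Q(s) + Ξ, 2^(Q(s+1)))`. -/
noncomputable def Jset (q Ξ : ℤ) (s : ℝ) : Set ℝ :=
  Set.Ico ((2 : ℝ) ^ (Qf q s) + Qf q (s + 1) - Qf q s + (Ξ : ℝ)) ((2 : ℝ) ^ (Qf q (s + 1)))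

/-- The sequence `(x_j)` in `{0,1}`: `x_j = 0` iff `j + 1 ∈ I_s` for some integer `s ≥ 0`. -/
noncomputable def xseq (q Ξ : ℤ) (j : ℕ) : ℕ :=
  if ∃ s : ℕ, ((j : ℝ) + 1) ∈ Iset q Ξ (s : ℝ) then 0 else 1

/-- `N(k) = #{ j ∈ {0,…,k−1} : x_j = 0 }`, with `N(0) = 0`. -/
noncomputable def Nf (q Ξ : ℤ) (k : ℕ) : ℕ :=
  ((Finset.range k).filter (fun j => xseq q Ξ j = 0)).card

/-- `B(0) = 0`, `B(1) = 1`, and for `k ≥ 2`,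
`B(k) = 1 + #{ j ∈ {0,…,k−2} : x_j ≠ x_{j+1} }`. -/
noncomputable def Bf (q Ξ : ℤ) (k : ℕ) : ℕ :=
  if k = 0 then 0
  else 1 + ((Finset.range (k - 1)).filter (fun j => xseq q Ξ j ≠ xseq q Ξ (j + 1))).card

/-- The length `|J_s| = 2^(Q(s+1)) − 2^(Q(s)) − (Q(s+1) − Q(s) + Ξ)` of `J_s`. -/
noncomputable def Jlen (q Ξ : ℤ) (s : ℝ) : ℝ :=
  (2 : ℝ) ^ (Qf q (s + 1)) - (2 : ℝ) ^ (Qf q s) - (Qf q (s + 1) - Qf q s + (Ξ : ℝ))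

/-- `λ(s) = 1/|J_s|`. -/
noncomputable def lamf (q Ξ : ℤ) (s : ℝ) : ℝ := 1 / Jlen q Ξ s

/-- The two-variable series `Π(τ,λ) = Σ_{k≥0} 2^(−λk − τ·N(k) + τ·ξ·B(k))`, a sum in `[0,∞]`. -/
noncomputable def Pi2 (q Ξ : ℤ) (ξ τ lam : ℝ) : ℝ≥0∞ :=
  ∑' k : ℕ, ENNReal.ofReal
    ((2 : ℝ) ^ (-lam * (k : ℝ) - τ * (Nf q Ξ k : ℝ) + τ * ξ * (Bf q Ξ k : ℝ)))

def An (q : ℤ) (s : ℕ) : ℕ := 2 ^ (q.toNat * s ^ 2)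
def Dn (q Ξ : ℤ) (s : ℕ) : ℕ := (q * (2 * s + 1) + Ξ).toNat

section Facts
variable {q Ξ : ℤ} (hq : 3 ≤ q) (hqΞ : 1 ≤ q + Ξ)

include hq hqΞ in
lemma Dn_cast (s : ℕ) : ((Dn q Ξ s : ℤ)) = q * (2 * s + 1) + Ξ := by
  have h : 0 ≤ q * (2 * (s:ℤ)) := by positivity
  have : 1 ≤ q * (2 * s + 1) + Ξ := by nlinarith
  simp only [Dn]
  omega

include hq hqΞ in
lemma Dn_pos (s : ℕ) : 1 ≤ Dn q Ξ s := by
  have := Dn_cast hq hqΞ (Ξ := Ξ) s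
  have h : 0 ≤ q * (2 * (s:ℤ)) := by positivity
  have : 1 ≤ ((Dn q Ξ s : ℤ)) := by rw [this]; nlinarith
  exact_mod_cast this

lemma An_one_le (s : ℕ) : 1 ≤ An q s := Nat.one_le_two_pow

include hq in
lemma rpow_Qf (s : ℕ) : (2 : ℝ) ^ (Qf q (s : ℝ)) = ((An q s : ℕ) : ℝ) := by
  have hqt : ((q.toNat : ℤ)) = q := Int.toNat_of_nonneg (by omega)
  have hqt' : ((q.toNat : ℕ) : ℝ) = (q : ℝ) := by exact_mod_cast hqt
  have h1 : Qf q (s : ℝ) = ((q.toNat * s ^ 2 : ℕ) : ℝ) := by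
    simp only [Qf]
    push_cast
    rw [hqt']
  rw [h1, Real.rpow_natCast, An]
  norm_cast

end Facts

section Sep
variable {q Ξ : ℤ} (hq : 3 ≤ q) (hqΞ : 1 ≤ q + Ξ)

include hq in
lemma hpow_nat (hpow : (q : ℝ) + 1 + (Ξ : ℝ) ≤ (2 : ℝ) ^ ((q : ℝ) - 1)) :
    q + 1 + Ξ ≤ (2:ℤ) ^ (q.toNat - 1) := by
  have hqt : ((q.toNat : ℤ)) = q := Int.toNat_of_nonneg (by omega)
  have h1 : ((q:ℝ)) - 1 = (((q.toNat - 1 : ℕ)) : ℝ) := by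
    have : (2:ℕ) ≤ q.toNat := by omega
    push_cast [Nat.cast_sub (by omega : 1 ≤ q.toNat)]
    have : ((q.toNat : ℝ)) = (q : ℝ) := by exact_mod_cast congrArg (Int.cast : ℤ → ℝ) hqt
    rw [this]
  rw [h1, Real.rpow_natCast] at hpow
  exact_mod_cast hpow

include hq hqΞ in
lemma sep (hpow2 : q + 1 + Ξ ≤ (2:ℤ) ^ (q.toNat - 1)) (s : ℕ) :
    An q s + Dn q Ξ s < An q (s + 1) := by
  set t := q.toNat with ht
  have hqt : ((t : ℤ)) = q := Int.toNat_of_nonneg (by omega)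
  have ht3 : 3 ≤ t := by omega
  -- bound on Dn
  have hZ : (Dn q Ξ s : ℤ) + 1 ≤ 2^(t-1) + 2*(t:ℤ)*s := by
    rw [Dn_cast hq hqΞ, ← hqt]
    have h2 : ((t:ℤ)) + 1 + Ξ ≤ 2^(t-1) := by rw [hqt]; exact hpow2
    nlinarith [h2]
  have hDb : Dn q Ξ s + 1 ≤ 2^(t-1) + 2*t*s := by exact_mod_cast hZ
  -- 2^(t*(2s+1)) is big
  have hp1 : 2*t*s + 1 < 2^(2*t*s+1) := Nat.lt_two_pow_self
  have hp2 : 4 ≤ 2^(t-1) := by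
    calc (4:ℕ) = 2^2 := rfl
    _ ≤ 2^(t-1) := Nat.pow_le_pow_right (by norm_num) (by omega)
  have heq : 2^(t*(2*s+1)) = 2^(t-1) * 2^(2*t*s+1) := by
    rw [← pow_add]
    congr 1
    have hm : t*(2*s+1) = 2*(t*s) + t := by ring
    have : 2*t*s = 2*(t*s) := by ring
    omega
  have key : Dn q Ξ s + 2 ≤ 2^(t*(2*s+1)) := by
    rw [heq]
    have h3 : 2^(t-1)*(2*t*s+2) ≤ 2^(t-1) * 2^(2*t*s+1) :=
      Nat.mul_le_mul_left _ (by omega)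
    have h5 : 2*t*s ≤ 2^(t-1)*(2*t*s) := Nat.le_mul_of_pos_left _ (by positivity)
    have h4 : (2*t*s) + 2*2^(t-1) ≤ 2^(t-1)*(2*t*s+2) := by nlinarith [h5]
    linarith
  have hA1 : 1 ≤ An q s := An_one_le s
  have hAe : An q (s+1) = An q s * 2^(t*(2*s+1)) := by
    show 2^(t*(s+1)^2) = 2^(t*s^2) * 2^(t*(2*s+1))
    rw [← pow_add]
    congr 1
    ring
  rw [hAe]
  nlinarith [key, hA1]

include hq in
lemma An_mono : StrictMono (An q) := by
  apply strictMono_nat_of_lt_succ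
  intro s
  show 2^(q.toNat * s^2) < 2^(q.toNat*(s+1)^2)
  apply Nat.pow_lt_pow_right (by norm_num)
  have h1 : 1 ≤ q.toNat := by omega
  have h2 : q.toNat*(s+1)^2 = q.toNat*s^2 + q.toNat*(2*s+1) := by ring
  have h3 : 1 ≤ q.toNat*(2*s+1) := Nat.one_le_iff_ne_zero.mpr (by positivity)
  linarith

end Sep

section Char
variable {q Ξ : ℤ} (hq : 3 ≤ q) (hqΞ : 1 ≤ q + Ξ)

include hq hqΞ in
lemma upper_eq (s : ℕ) :
    (2:ℝ)^(Qf q (s:ℝ)) + Qf q ((s:ℝ)+1) - Qf q (s:ℝ) + (Ξ:ℝ)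
      = ((An q s + Dn q Ξ s : ℕ) : ℝ) := by
  have hD : ((Dn q Ξ s : ℕ) : ℝ) = (q:ℝ)*(2*(s:ℝ)+1) + (Ξ:ℝ) := by
    have h := Dn_cast hq hqΞ (Ξ := Ξ) s
    have h2 := congrArg (fun z : ℤ => (z:ℝ)) h
    push_cast at h2
    exact h2
  rw [rpow_Qf hq]
  simp only [Qf]
  push_cast
  linear_combination -hD

include hq hqΞ in
lemma mem_I_iff (s n : ℕ) :
    ((n : ℝ)) ∈ Iset q Ξ (s : ℝ) ↔ (An q s ≤ n ∧ n < An q s + Dn q Ξ s) := by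
  rw [Iset, Set.mem_Ico, upper_eq hq hqΞ, rpow_Qf hq]
  constructor
  · rintro ⟨h1, h2⟩; exact ⟨by exact_mod_cast h1, by exact_mod_cast h2⟩
  · rintro ⟨h1, h2⟩; exact ⟨by exact_mod_cast h1, by exact_mod_cast h2⟩

include hq hqΞ in
lemma x_char (j : ℕ) :
    xseq q Ξ j = 0 ↔ ∃ s : ℕ, An q s ≤ j+1 ∧ j+1 < An q s + Dn q Ξ s := by
  have hc : ((j:ℝ)+1) = (((j+1:ℕ)):ℝ) := by push_cast; ring
  have he : (∃ s : ℕ, (((j+1:ℕ)):ℝ) ∈ Iset q Ξ (s:ℝ)) ↔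
      ∃ s, An q s ≤ j+1 ∧ j+1 < An q s + Dn q Ξ s :=
    exists_congr (fun s => mem_I_iff hq hqΞ s (j+1))
  simp only [xseq, hc]
  split_ifs with h
  · exact iff_of_true rfl (he.mp h)
  · exact iff_of_false (by norm_num) (fun hp => h (he.mpr hp))

include hq hqΞ in
lemma memJ (s k : ℕ)
    (hk : (k : ℝ) ∈ Set.Ico ((2 : ℝ) ^ (Qf q (s:ℝ)) + Qf q ((s:ℝ) + 1) - Qf q (s:ℝ) + (Ξ : ℝ))
      ((2 : ℝ) ^ (Qf q ((s:ℝ) + 1)))) :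
    An q s + Dn q Ξ s ≤ k ∧ k < An q (s+1) := by
  obtain ⟨h1, h2⟩ := hk
  rw [upper_eq hq hqΞ] at h1
  have hc : ((s:ℝ)+1) = (((s+1:ℕ)):ℝ) := by push_cast; ring
  rw [hc, rpow_Qf hq] at h2
  exact ⟨by exact_mod_cast h1, by exact_mod_cast h2⟩

end Char

section Count
variable {q Ξ : ℤ} (hq : 3 ≤ q) (hqΞ : 1 ≤ q + Ξ)
  (hpow2 : q + 1 + Ξ ≤ (2:ℤ) ^ (q.toNat - 1))

include hq hqΞ hpow2 in
lemma AD_lt_An {s t : ℕ} (hst : s < t) : An q s + Dn q Ξ s < An q t :=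
  lt_of_lt_of_le (sep hq hqΞ hpow2 s) ((An_mono hq).monotone hst)

include hq hqΞ hpow2 in
lemma AD_mono {s t : ℕ} (hst : s ≤ t) : An q s + Dn q Ξ s ≤ An q t + Dn q Ξ t := by
  rcases eq_or_lt_of_le hst with rfl | h
  · rfl
  · exact le_of_lt (lt_of_lt_of_le (AD_lt_An hq hqΞ hpow2 h) (Nat.le_add_right _ _))

include hq hqΞ hpow2 in
lemma N_count (s0 k : ℕ) (hk1 : An q s0 + Dn q Ξ s0 ≤ k) (hk2 : k < An q (s0+1)) :
    ((Finset.range k).filter (fun j => xseq q Ξ j = 0)).card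
      = ∑ s ∈ Finset.range (s0+1), Dn q Ξ s := by
  have hset : (Finset.range k).filter (fun j => xseq q Ξ j = 0)
      = (Finset.range (s0+1)).biUnion
          (fun s => Finset.Ico (An q s - 1) (An q s + Dn q Ξ s - 1)) := by
    ext j
    simp only [Finset.mem_filter, Finset.mem_range, Finset.mem_biUnion, Finset.mem_Ico,
      x_char hq hqΞ]
    constructor
    · rintro ⟨hjk, s, hs1, hs2⟩
      have hA1 := An_one_le (q := q) s
      have hsle : s < s0 + 1 := by
        by_contra hcon
        have : An q (s0+1) ≤ An q s := (An_mono hq).monotone (by omega)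
        omega
      exact ⟨s, hsle, by omega, by omega⟩
    · rintro ⟨s, hs, h1, h2⟩
      have hA1 := An_one_le (q := q) s
      have hD1 := Dn_pos hq hqΞ (Ξ := Ξ) s
      have hle : An q s + Dn q Ξ s ≤ An q s0 + Dn q Ξ s0 :=
        AD_mono hq hqΞ hpow2 (by omega)
      exact ⟨by omega, s, by omega, by omega⟩
  rw [hset, Finset.card_biUnion]
  · apply Finset.sum_congr rfl
    intro s _
    rw [Nat.card_Ico]
    have hA1 := An_one_le (q := q) s
    omega
  · intro s hs t ht hst
    apply Finset.disjoint_left.mpr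
    intro a ha hb
    rw [Finset.mem_Ico] at ha hb
    have hA1s := An_one_le (q := q) s
    have hA1t := An_one_le (q := q) t
    rcases lt_or_gt_of_ne hst with h | h
    · have := AD_lt_An hq hqΞ hpow2 h
      omega
    · have := AD_lt_An hq hqΞ hpow2 h
      omega

include hq hqΞ in
lemma sum_Dn (n : ℕ) :
    ((∑ s ∈ Finset.range n, Dn q Ξ s : ℕ) : ℤ) = q * n^2 + Ξ * n := by
  induction n with
  | zero => simp
  | succ m ih =>
    rw [Finset.sum_range_succ]
    push_cast [Dn_cast hq hqΞ] at ih ⊢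
    rw [ih]
    ring

end Count

section BCount
variable {q Ξ : ℤ} (hq : 3 ≤ q) (hqΞ : 1 ≤ q + Ξ)
  (hpow2 : q + 1 + Ξ ≤ (2:ℤ) ^ (q.toNat - 1))

lemma x_dichot (j : ℕ) : xseq q Ξ j = 0 ∨ xseq q Ξ j = 1 := by
  rw [xseq]; split_ifs <;> simp

include hq hqΞ hpow2 in
lemma change_iff (s0 k : ℕ) (hk1 : An q s0 + Dn q Ξ s0 ≤ k) (hk2 : k < An q (s0+1))
    (j : ℕ) (hj : j < k - 1) :
    xseq q Ξ j ≠ xseq q Ξ (j+1) ↔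
      ((∃ s, s ≤ s0 ∧ j + 2 = An q s + Dn q Ξ s) ∨
       (∃ s, 1 ≤ s ∧ s ≤ s0 ∧ j + 2 = An q s)) := by
  have hk2' : 2 ≤ k := by
    have := An_one_le (q := q) s0
    have := Dn_pos hq hqΞ (Ξ := Ξ) s0
    omega
  have hjk : j + 2 ≤ k := by omega
  have hcP : xseq q Ξ j = 0 ↔ ∃ s, An q s ≤ j+1 ∧ j+1 < An q s + Dn q Ξ s :=
    x_char hq hqΞ j
  have hcQ : xseq q Ξ (j+1) = 0 ↔ ∃ s, An q s ≤ j+2 ∧ j+2 < An q s + Dn q Ξ s :=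
    x_char hq hqΞ (j+1)
  constructor
  · intro hne
    rcases x_dichot (q := q) (Ξ := Ξ) j with h0 | h1
    · -- x_j = 0, so x_{j+1} = 1, i.e. ¬ P(j+1)
      have hx1 : xseq q Ξ (j+1) ≠ 0 := fun h => hne (h0.trans h.symm)
      obtain ⟨s, hs1, hs2⟩ := hcP.mp h0
      have hnot : ¬ (An q s ≤ j+2 ∧ j+2 < An q s + Dn q Ξ s) :=
        fun h => hx1 (hcQ.mpr ⟨s, h⟩)
      have heq2 : j + 2 = An q s + Dn q Ξ s := by omega
      left
      refine ⟨s, ?_, heq2⟩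
      by_contra hcon
      have hAs : An q (s0+1) ≤ An q s := (An_mono hq).monotone (by omega)
      have := Dn_pos hq hqΞ (Ξ := Ξ) s
      omega
    · -- x_j = 1, so x_{j+1} = 0
      have hx1 : xseq q Ξ (j+1) = 0 := by
        rcases x_dichot (q := q) (Ξ := Ξ) (j+1) with h | h
        · exact h
        · exact absurd (h1.trans h.symm) hne
      obtain ⟨s, hs1, hs2⟩ := hcQ.mp hx1
      have hx0 : xseq q Ξ j ≠ 0 := by omega
      have hnot : ¬ (An q s ≤ j+1 ∧ j+1 < An q s + Dn q Ξ s) :=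
        fun h => hx0 (hcP.mpr ⟨s, h⟩)
      have heq2 : j + 2 = An q s := by omega
      right
      have hs_ge : 1 ≤ s := by
        by_contra hcon
        have : s = 0 := by omega
        subst this
        have : An q 0 = 1 := by simp [An]
        omega
      refine ⟨s, hs_ge, ?_, heq2⟩
      by_contra hcon
      have hAs : An q (s0+1) ≤ An q s := (An_mono hq).monotone (by omega)
      omega
  · rintro (⟨s, hss0, heq2⟩ | ⟨s, hs1, hss0, heq2⟩)
    · -- leaving boundary: x_j = 0, x_{j+1} = 1
      have hA1 := An_one_le (q := q) s
      have hD1 := Dn_pos hq hqΞ (Ξ := Ξ) s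
      have hx0 : xseq q Ξ j = 0 := hcP.mpr ⟨s, by omega, by omega⟩
      have hx1 : xseq q Ξ (j+1) ≠ 0 := by
        simp only [Ne, hcQ]
        rintro ⟨s', h1, h2⟩
        rcases le_or_gt s' s with h | h
        · have := AD_mono hq hqΞ hpow2 h
          omega
        · have := AD_lt_An hq hqΞ hpow2 h
          omega
      omega
    · -- entering boundary: x_j = 1, x_{j+1} = 0
      have hA1 := An_one_le (q := q) s
      have hD1 := Dn_pos hq hqΞ (Ξ := Ξ) s
      have hx1 : xseq q Ξ (j+1) = 0 := hcQ.mpr ⟨s, by omega, by omega⟩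
      have hx0 : xseq q Ξ j ≠ 0 := by
        simp only [Ne, hcP]
        rintro ⟨s', h1, h2⟩
        rcases lt_or_ge s' s with h | h
        · have := AD_lt_An hq hqΞ hpow2 h
          omega
        · have : An q s ≤ An q s' := (An_mono hq).monotone h
          omega
      omega
end BCount

section BCard
variable {q Ξ : ℤ} (hq : 3 ≤ q) (hqΞ : 1 ≤ q + Ξ)
  (hpow2 : q + 1 + Ξ ≤ (2:ℤ) ^ (q.toNat - 1))

include hq hqΞ hpow2 in
lemma B_count (s0 k : ℕ) (hk1 : An q s0 + Dn q Ξ s0 ≤ k) (hk2 : k < An q (s0+1)) :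
    ((Finset.range (k-1)).filter (fun j => xseq q Ξ j ≠ xseq q Ξ (j+1))).card
      = 2*s0 + 1 := by
  have hA0 : An q 0 = 1 := by simp [An]
  have hD0 := Dn_pos hq hqΞ (Ξ := Ξ) 0
  have hk2' : 2 ≤ k := by
    have h := AD_mono hq hqΞ hpow2 (Nat.zero_le s0)
    omega
  set S1 : Finset ℕ := (Finset.range (s0+1)).image (fun s => An q s + Dn q Ξ s - 2) with hS1
  set S2 : Finset ℕ := (Finset.Icc 1 s0).image (fun s => An q s - 2) with hS2
  have hset : (Finset.range (k-1)).filter (fun j => xseq q Ξ j ≠ xseq q Ξ (j+1))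
      = S1 ∪ S2 := by
    ext j
    simp only [hS1, hS2, Finset.mem_filter, Finset.mem_range, Finset.mem_union,
      Finset.mem_image, Finset.mem_Icc]
    constructor
    · rintro ⟨hjk, hch⟩
      rcases (change_iff hq hqΞ hpow2 s0 k hk1 hk2 j hjk).mp hch with ⟨s, hs, he⟩ | ⟨s, h1, h2, he⟩
      · exact Or.inl ⟨s, by omega, by omega⟩
      · exact Or.inr ⟨s, ⟨h1, h2⟩, by omega⟩
    · rintro (⟨s, hs, he⟩ | ⟨s, ⟨h1, h2⟩, he⟩)
      · have hA1 := An_one_le (q := q) s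
        have hD1 := Dn_pos hq hqΞ (Ξ := Ξ) s
        have hle : An q s + Dn q Ξ s ≤ An q s0 + Dn q Ξ s0 := AD_mono hq hqΞ hpow2 (by omega)
        have hjk : j < k - 1 := by omega
        exact ⟨hjk, (change_iff hq hqΞ hpow2 s0 k hk1 hk2 j hjk).mpr
          (Or.inl ⟨s, by omega, by omega⟩)⟩
      · have hA1 := An_one_le (q := q) s
        have hD1s0 := Dn_pos hq hqΞ (Ξ := Ξ) s0
        have hle : An q s ≤ An q s0 := (An_mono hq).monotone h2
        have hA2 : 2 ≤ An q s := by
          have h8 : An q 1 ≤ An q s := (An_mono hq).monotone h1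
          have : (8:ℕ) ≤ An q 1 := by
            show 8 ≤ 2 ^ (q.toNat * 1 ^ 2)
            calc (8:ℕ) = 2^3 := rfl
            _ ≤ 2 ^ (q.toNat * 1 ^ 2) := Nat.pow_le_pow_right (by norm_num) (by simp; omega)
          omega
        have hjk : j < k - 1 := by omega
        exact ⟨hjk, (change_iff hq hqΞ hpow2 s0 k hk1 hk2 j hjk).mpr
          (Or.inr ⟨s, h1, h2, by omega⟩)⟩
  rw [hset]
  have hA2 : ∀ s : ℕ, 1 ≤ s → 2 ≤ An q s := by
    intro s hs
    have h8 : An q 1 ≤ An q s := (An_mono hq).monotone hs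
    have : (8:ℕ) ≤ An q 1 := by
      show 8 ≤ 2 ^ (q.toNat * 1 ^ 2)
      calc (8:ℕ) = 2^3 := rfl
      _ ≤ 2 ^ (q.toNat * 1 ^ 2) := Nat.pow_le_pow_right (by norm_num) (by simp; omega)
    omega
  have hdisj : Disjoint S1 S2 := by
    rw [Finset.disjoint_left]
    rintro a ha hb
    simp only [hS1, hS2, Finset.mem_image, Finset.mem_range, Finset.mem_Icc] at ha hb
    obtain ⟨s, hs, he⟩ := ha
    obtain ⟨s', ⟨hs1', hs2'⟩, he'⟩ := hb
    have hA1 := An_one_le (q := q) s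
    have hD1 := Dn_pos hq hqΞ (Ξ := Ξ) s
    have h2' := hA2 s' hs1'
    have heq : An q s + Dn q Ξ s = An q s' := by omega
    rcases lt_or_ge s s' with h | h
    · have := AD_lt_An hq hqΞ hpow2 h
      omega
    · have := (An_mono hq).monotone h
      omega
  rw [Finset.card_union_of_disjoint hdisj]
  have hc1 : S1.card = s0 + 1 := by
    rw [hS1, Finset.card_image_of_injective _ ?_, Finset.card_range]
    have hmono : StrictMono (fun s => An q s + Dn q Ξ s - 2) := by
      apply strictMono_nat_of_lt_succ
      intro s
      have h1 := AD_lt_An hq hqΞ hpow2 (by omega : s < s + 1)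
      have hA1 := An_one_le (q := q) s
      have hD1 := Dn_pos hq hqΞ (Ξ := Ξ) s
      have hD1' := Dn_pos hq hqΞ (Ξ := Ξ) (s+1)
      show An q s + Dn q Ξ s - 2 < An q (s+1) + Dn q Ξ (s+1) - 2
      omega
    exact hmono.injective
  have hc2 : S2.card = s0 := by
    rw [hS2, Finset.card_image_of_injOn, Nat.card_Icc]
    · omega
    · intro a ha b hb hab
      simp only [Finset.mem_coe, Finset.mem_Icc] at ha hb
      have h2a := hA2 a ha.1
      have h2b := hA2 b hb.1
      have hab' : An q a - 2 = An q b - 2 := hab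
      have : An q a = An q b := by omega
      exact (An_mono hq).injective this
  rw [hc1, hc2]
  omega

end BCard

theorem stmt2 (Ξ q : ℤ) (hq : 3 ≤ q) (hqΞ : 1 ≤ q + Ξ)
    (hpow : (q : ℝ) + 1 + (Ξ : ℝ) ≤ (2 : ℝ) ^ ((q : ℝ) - 1)) :
    ∀ s : ℕ, ∀ k : ℕ, (k : ℝ) ∈ Jset q Ξ (s : ℝ) →
      (Nf q Ξ k : ℝ) = Qf q ((s : ℝ) + 1) + (Ξ : ℝ) * ((s : ℝ) + 1) ∧
      Bf q Ξ k = 2 * (s + 1) := by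
  intro s k hk
  have hpow2 := hpow_nat hq hpow
  rw [Jset] at hk
  obtain ⟨hk1, hk2⟩ := memJ hq hqΞ s k hk
  constructor
  · have hN : (Nf q Ξ k : ℤ) = q * ((s:ℤ)+1)^2 + Ξ * ((s:ℤ)+1) := by
      have h1 : Nf q Ξ k = ∑ s' ∈ Finset.range (s+1), Dn q Ξ s' :=
        N_count hq hqΞ hpow2 s k hk1 hk2
      have h2 := sum_Dn hq hqΞ (Ξ := Ξ) (s+1)
      rw [h1, h2]
      push_cast
      ring
    have hR := congrArg (fun z : ℤ => (z:ℝ)) hN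
    push_cast at hR
    simp only [Qf]
    rw [hR]
  · have hBc := B_count hq hqΞ hpow2 s k hk1 hk2
    have hk0 : k ≠ 0 := by
      have := An_one_le (q := q) s
      have := Dn_pos hq hqΞ (Ξ := Ξ) s
      omega
    simp only [Bf, if_neg hk0]
    rw [hBc]
    ring
end

section
/- For every integer s ≥ 0 and every integer k lying in I_s (i.e. 2^(Q(s)) ≤ k < 2^(Q(s)) + Q(s+1) − Q(s) + Ξ), one has N(k) = k − (2^(Q(s)) − 1) + Q(s) + Ξ·s and B(k) = 2s + 1. -/
open scoped Classical ENNReal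
open Real Set Filter

namespace StmtAux

def Pn (q : ℤ) (s : ℕ) : ℕ := 2 ^ (q.toNat * s ^ 2)

def Dn (q Ξ : ℤ) (s : ℕ) : ℕ := (q * (2 * s + 1) + Ξ).toNat

section

variable {q Ξ : ℤ} (hq : 3 ≤ q) (hqΞ : 1 ≤ q + Ξ)

include hq hqΞ

lemma hD_int (s : ℕ) : (1 : ℤ) ≤ q * (2 * s + 1) + Ξ := by
  have h0 : (0 : ℤ) ≤ q * (2 * s) := mul_nonneg (by omega) (by positivity)
  nlinarith

lemma Dn_cast (s : ℕ) : ((Dn q Ξ s : ℤ)) = q * (2 * s + 1) + Ξ :=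
  Int.toNat_of_nonneg (by linarith [hD_int hq hqΞ s])

lemma Dn_pos (s : ℕ) : 1 ≤ Dn q Ξ s := by
  have h : (1 : ℤ) ≤ (Dn q Ξ s : ℤ) := (Dn_cast hq hqΞ s) ▸ hD_int hq hqΞ s
  exact_mod_cast h

omit hqΞ

lemma Pn_pos (s : ℕ) : 1 ≤ Pn q s := Nat.one_le_two_pow

lemma Pn_mono {s t : ℕ} (h : s ≤ t) : Pn q s ≤ Pn q t :=
  Nat.pow_le_pow_right (by norm_num)
    (Nat.mul_le_mul_left _ (Nat.pow_le_pow_left h 2))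

lemma hpow_nat (hpow : (q : ℝ) + 1 + (Ξ : ℝ) ≤ (2 : ℝ) ^ ((q : ℝ) - 1)) :
    q + 1 + Ξ ≤ (2 : ℤ) ^ (q.toNat - 1) := by
  have hqn : (q.toNat : ℤ) = q := Int.toNat_of_nonneg (by omega)
  have h1 : ((q : ℝ) - 1) = ((q.toNat - 1 : ℕ) : ℝ) := by
    have h2 : ((q.toNat - 1 : ℕ) : ℤ) = q - 1 := by omega
    have h3 := congrArg (fun z : ℤ => (z : ℝ)) h2
    push_cast at h3
    linarith
  rw [h1, Real.rpow_natCast] at hpow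
  exact_mod_cast hpow

include hqΞ

lemma key (hpow : (q : ℝ) + 1 + (Ξ : ℝ) ≤ (2 : ℝ) ^ ((q : ℝ) - 1)) (s : ℕ) :
    Pn q s + Dn q Ξ s < Pn q (s + 1) := by
  have hqn : (q.toNat : ℤ) = q := Int.toNat_of_nonneg (by omega)
  set n := q.toNat with hn
  have hn3 : 3 ≤ n := by omega
  have hpn := hpow_nat hq hpow
  have hDb : Dn q Ξ s + 1 ≤ 2 ^ (n - 1) + 2 * n * s := by
    have h1 : ((Dn q Ξ s : ℤ)) = q * (2 * s + 1) + Ξ := Dn_cast hq hqΞ s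
    have h2 : ((2 ^ (n - 1) : ℕ) : ℤ) = (2 : ℤ) ^ (n - 1) := by push_cast; ring
    have h3 : (Dn q Ξ s : ℤ) + 1 ≤ ((2 ^ (n - 1) : ℕ) : ℤ) + 2 * n * s := by
      rw [h1, h2, hqn]
      nlinarith [hpn]
    exact_mod_cast h3
  have hv : 2 * n * s + 1 ≤ 2 ^ (2 * n * s) := Nat.lt_two_pow_self
  have h6 : n - 1 + 1 = n := by omega
  have hexp : n * (s + 1) ^ 2 = n * s ^ 2 + ((n - 1) + 2 * n * s + 1) := by
    calc n * (s + 1) ^ 2 = n * s ^ 2 + (2 * n * s + ((n - 1) + 1)) := by rw [h6]; ring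
    _ = n * s ^ 2 + ((n - 1) + 2 * n * s + 1) := by ring
  rw [Pn, Pn, hexp, pow_add, pow_add, pow_add]
  set A := 2 ^ (n * s ^ 2) with hA
  have hA1 : 1 ≤ A := Nat.one_le_two_pow
  set u := 2 ^ (n - 1) with hu
  set v := 2 ^ (2 * n * s) with hv2
  have hu4 : 4 ≤ u := by
    calc (4 : ℕ) = 2 ^ 2 := by norm_num
    _ ≤ u := Nat.pow_le_pow_right (by norm_num) (by omega)
  have hv1 : 1 ≤ v := Nat.one_le_two_pow
  have hDb2 : Dn q Ξ s + 2 ≤ u + v := by linarith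
  have e1 : u + v ≤ u * v + 1 := by
    have : (4 : ℕ) * 1 ≤ u * v := Nat.mul_le_mul hu4 hv1
    nlinarith
  have e2 : u * v ≤ A * (u * v) := Nat.le_mul_of_pos_left _ (by omega)
  have e3 : A ≤ A * (u * v) := Nat.le_mul_of_pos_right _ (by positivity)
  have hfin : A + Dn q Ξ s < 2 * (A * (u * v)) := by linarith
  calc A + Dn q Ξ s < 2 * (A * (u * v)) := hfin
  _ = A * (u * v * 2 ^ 1) := by ring

lemma chain (hpow : (q : ℝ) + 1 + (Ξ : ℝ) ≤ (2 : ℝ) ^ ((q : ℝ) - 1))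
    {s t : ℕ} (h : s < t) : Pn q s + Dn q Ξ s ≤ Pn q t := by
  induction t with
  | zero => omega
  | succ m ih =>
    rcases Nat.lt_succ_iff_lt_or_eq.mp h with h' | h'
    · exact le_trans (le_trans (ih h') (Nat.le_add_right _ _)) (key hq hqΞ hpow m).le
    · subst h'; exact (key hq hqΞ hpow s).le

lemma mem_Iset_iff (s k : ℕ) :
    ((k : ℝ) ∈ Iset q Ξ (s : ℝ)) ↔ (Pn q s ≤ k ∧ k < Pn q s + Dn q Ξ s) := by
  have hqn : (q.toNat : ℤ) = q := Int.toNat_of_nonneg (by omega)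
  have hqr : ((q.toNat : ℕ) : ℝ) = (q : ℝ) := by exact_mod_cast congrArg (fun z : ℤ => (z : ℝ)) hqn
  have hQ : Qf q (s : ℝ) = ((q.toNat * s ^ 2 : ℕ) : ℝ) := by
    rw [Qf]; push_cast; rw [hqr]
  have hP : (2 : ℝ) ^ (Qf q (s : ℝ)) = (Pn q s : ℝ) := by
    rw [hQ, Real.rpow_natCast, Pn]; push_cast; ring
  have hDr : ((Dn q Ξ s : ℕ) : ℝ) = (q : ℝ) * (2 * s + 1) + Ξ := by
    have h1 := Dn_cast hq hqΞ (Ξ := Ξ) s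
    have h2 := congrArg (fun z : ℤ => (z : ℝ)) h1
    push_cast at h2; push_cast; linarith
  have hU : (2 : ℝ) ^ (Qf q (s : ℝ)) + Qf q ((s : ℝ) + 1) - Qf q (s : ℝ) + (Ξ : ℝ)
      = ((Pn q s + Dn q Ξ s : ℕ) : ℝ) := by
    have h7 : ((Pn q s + Dn q Ξ s : ℕ) : ℝ) = (Pn q s : ℝ) + ((Dn q Ξ s : ℕ) : ℝ) := by
      push_cast; ring
    rw [h7, hDr, hP]; simp only [Qf]; push_cast; ring
  rw [Iset, Set.mem_Ico, hU, hP]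
  constructor
  · rintro ⟨h1, h2⟩
    exact ⟨by exact_mod_cast h1, by exact_mod_cast h2⟩
  · rintro ⟨h1, h2⟩
    exact ⟨by exact_mod_cast h1, by exact_mod_cast h2⟩

lemma xseq_zero_iff (j : ℕ) :
    xseq q Ξ j = 0 ↔ ∃ s : ℕ, Pn q s ≤ j + 1 ∧ j + 1 < Pn q s + Dn q Ξ s := by
  have hcast : ∀ s : ℕ, (((j : ℝ) + 1) ∈ Iset q Ξ (s : ℝ)) ↔
      (Pn q s ≤ j + 1 ∧ j + 1 < Pn q s + Dn q Ξ s) := by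
    intro s
    have h0 : ((j : ℝ) + 1) = ((j + 1 : ℕ) : ℝ) := by push_cast; ring
    rw [h0, mem_Iset_iff hq hqΞ]
  rw [xseq]
  split_ifs with h
  · simp only [true_iff]
    obtain ⟨s, hs⟩ := h
    exact ⟨s, (hcast s).mp hs⟩
  · simp only [one_ne_zero, false_iff]
    rintro ⟨s, hs⟩
    exact h ⟨s, (hcast s).mpr hs⟩

lemma xseq_one_iff (j : ℕ) :
    xseq q Ξ j = 1 ↔ ¬ ∃ s : ℕ, Pn q s ≤ j + 1 ∧ j + 1 < Pn q s + Dn q Ξ s := by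
  have h01 : xseq q Ξ j = 0 ∨ xseq q Ξ j = 1 := by
    rw [xseq]; split_ifs <;> simp
  have h := xseq_zero_iff hq hqΞ (Ξ := Ξ) j
  constructor
  · intro h1 h2
    rw [← h] at h2; omega
  · intro h2
    rcases h01 with h0 | h1
    · exact absurd (h.mp h0) h2
    · exact h1

lemma not_in (hpow : (q : ℝ) + 1 + (Ξ : ℝ) ≤ (2 : ℝ) ^ ((q : ℝ) - 1))
    {m s : ℕ} (h1 : Pn q s + Dn q Ξ s ≤ m) (h2 : m < Pn q (s + 1)) :
    ¬ ∃ t : ℕ, Pn q t ≤ m ∧ m < Pn q t + Dn q Ξ t := by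
  rintro ⟨t, ha, hb⟩
  rcases lt_trichotomy t s with h | h | h
  · have hc := chain hq hqΞ hpow h
    omega
  · subst h; omega
  · have hd : Pn q (s + 1) ≤ Pn q t := Pn_mono hq h
    omega

omit hq hqΞ in
lemma Nf_succ (k : ℕ) :
    Nf q Ξ (k + 1) = Nf q Ξ k + if xseq q Ξ k = 0 then 1 else 0 := by
  rw [Nf, Nf, Finset.range_add_one, Finset.filter_insert]
  split_ifs with h
  · rw [Finset.card_insert_of_notMem (by simp)]
  · rfl

omit hq hqΞ in
lemma Bf_succ {k : ℕ} (hk : 1 ≤ k) :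
    Bf q Ξ (k + 1) = Bf q Ξ k + if xseq q Ξ (k - 1) = xseq q Ξ k then 0 else 1 := by
  obtain ⟨m, rfl⟩ : ∃ m, k = m + 1 := ⟨k - 1, by omega⟩
  rw [Bf, Bf]
  simp only [Nat.succ_ne_zero, if_false, Nat.add_sub_cancel]
  rw [Finset.range_add_one, Finset.filter_insert]
  rcases eq_or_ne (xseq q Ξ m) (xseq q Ξ (m + 1)) with h | h
  · rw [if_pos h, if_neg (not_not.mpr h)]
    omega
  · rw [if_neg h, if_pos h, Finset.card_insert_of_notMem (by simp)]
    omega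

lemma two_rpow (s : ℕ) : (2 : ℝ) ^ (Qf q (s : ℝ)) = (Pn q s : ℝ) := by
  have hqn : (q.toNat : ℤ) = q := Int.toNat_of_nonneg (by omega)
  have hqr : ((q.toNat : ℕ) : ℝ) = (q : ℝ) := by exact_mod_cast congrArg (fun z : ℤ => (z : ℝ)) hqn
  have hQ : Qf q (s : ℝ) = ((q.toNat * s ^ 2 : ℕ) : ℝ) := by
    rw [Qf]; push_cast; rw [hqr]
  rw [hQ, Real.rpow_natCast, Pn]; push_cast; ring

include hqΞ

lemma inI {s : ℕ} : ∀ k, Pn q s ≤ k → k < Pn q s + Dn q Ξ s →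
    ((Nf q Ξ k : ℤ) = (Nf q Ξ (Pn q s) : ℤ) + ((k : ℤ) - (Pn q s : ℤ)) ∧
      Bf q Ξ k = Bf q Ξ (Pn q s)) := by
  intro k h1
  have hP1 : 1 ≤ Pn q s := Pn_pos hq s
  induction k, h1 using Nat.le_induction with
  | base =>
    intro _
    refine ⟨by push_cast; ring, rfl⟩
  | succ k hk ih =>
    intro hlt
    obtain ⟨ihN, ihB⟩ := ih (by omega)
    have hx : xseq q Ξ k = 0 := (xseq_zero_iff hq hqΞ k).mpr ⟨s, by omega, by omega⟩
    have hx' : xseq q Ξ (k - 1) = 0 :=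
      (xseq_zero_iff hq hqΞ (k - 1)).mpr ⟨s, by omega, by omega⟩
    constructor
    · rw [Nf_succ, hx]
      push_cast
      push_cast at ihN
      linarith
    · rw [Bf_succ (show 1 ≤ k by omega), hx', hx]
      simpa using ihB

lemma baseI (hpow : (q : ℝ) + 1 + (Ξ : ℝ) ≤ (2 : ℝ) ^ ((q : ℝ) - 1)) :
    ∀ s : ℕ, (Nf q Ξ (Pn q s) : ℤ) = q * s ^ 2 + Ξ * s + 1 ∧
      Bf q Ξ (Pn q s) = 2 * s + 1 := by
  intro s
  induction s with
  | zero =>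
    have hP0 : Pn q 0 = 1 := by simp [Pn]
    have hx : xseq q Ξ 0 = 0 :=
      (xseq_zero_iff hq hqΞ 0).mpr ⟨0, by omega, by have := Dn_pos hq hqΞ (Ξ := Ξ) 0; omega⟩
    constructor
    · rw [hP0]
      have h1 : Nf q Ξ 1 = Nf q Ξ 0 + 1 := by rw [Nf_succ, hx]; simp
      have h0 : Nf q Ξ 0 = 0 := by rw [Nf]; simp
      rw [h1, h0]; push_cast; ring
    · rw [hP0, Bf]; simp
  | succ s ih =>
    obtain ⟨ihN, ihB⟩ := ih
    set P := Pn q s with hPdef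
    set D := Dn q Ξ s with hDdef
    set a := P + D with hadef
    set b := Pn q (s + 1) with hbdef
    have hP1 : 1 ≤ P := Pn_pos hq s
    have hD1 : 1 ≤ D := Dn_pos hq hqΞ s
    have hab : a < b := key hq hqΞ hpow s
    have hDb1 : 1 ≤ Dn q Ξ (s + 1) := Dn_pos hq hqΞ (s + 1)
    -- value at a - 1 (last point of I_s)
    obtain ⟨hNa1, hBa1⟩ := inI hq hqΞ (s := s) (a - 1) (by omega) (by omega)
    -- step to a
    have hxa1 : xseq q Ξ (a - 1) = 1 := by
      rw [xseq_one_iff hq hqΞ]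
      have h9 : a - 1 + 1 = a := by omega
      rw [h9]
      exact not_in hq hqΞ hpow (le_refl a) hab
    have hxa2 : xseq q Ξ (a - 1 - 1) = 0 := by
      refine (xseq_zero_iff hq hqΞ _).mpr ⟨s, ?_, ?_⟩ <;> omega
    have hNa : Nf q Ξ a = Nf q Ξ (a - 1) := by
      have h9 : a - 1 + 1 = a := by omega
      have := Nf_succ (q := q) (Ξ := Ξ) (a - 1)
      rw [h9, hxa1] at this
      simpa using this
    have hBa : Bf q Ξ a = Bf q Ξ (a - 1) + 1 := by
      have h9 : a - 1 + 1 = a := by omega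
      have := Bf_succ (q := q) (Ξ := Ξ) (k := a - 1) (by omega)
      rw [h9, hxa2, hxa1] at this
      simpa using this
    -- constant across J_s
    have crossJ : ∀ k, a ≤ k → k < b → Nf q Ξ k = Nf q Ξ a ∧ Bf q Ξ k = Bf q Ξ a := by
      intro k hk
      induction k, hk using Nat.le_induction with
      | base => intro _; exact ⟨rfl, rfl⟩
      | succ k hk2 ih2 =>
        intro hlt
        obtain ⟨ihN2, ihB2⟩ := ih2 (by omega)
        have hxk : xseq q Ξ k = 1 := by
          rw [xseq_one_iff hq hqΞ]
          exact not_in hq hqΞ hpow (show a ≤ k + 1 by omega) hlt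
        have hxk1 : xseq q Ξ (k - 1) = 1 := by
          rw [xseq_one_iff hq hqΞ]
          have h9 : k - 1 + 1 = k := by omega
          rw [h9]
          exact not_in hq hqΞ hpow hk2 (by omega)
        constructor
        · rw [Nf_succ, hxk]; simpa using ihN2
        · rw [Bf_succ (show 1 ≤ k by omega), hxk1, hxk]; simpa using ihB2
    obtain ⟨hNb1, hBb1⟩ := crossJ (b - 1) (by omega) (by omega)
    -- step to b
    have hxb1 : xseq q Ξ (b - 1) = 0 := by
      refine (xseq_zero_iff hq hqΞ _).mpr ⟨s + 1, ?_, ?_⟩ <;> omega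
    have hxb2 : xseq q Ξ (b - 1 - 1) = 1 := by
      rw [xseq_one_iff hq hqΞ]
      have h9 : b - 1 - 1 + 1 = b - 1 := by omega
      rw [h9]
      exact not_in hq hqΞ hpow (show a ≤ b - 1 by omega) (by omega)
    have hNb : Nf q Ξ b = Nf q Ξ (b - 1) + 1 := by
      have h9 : b - 1 + 1 = b := by omega
      have := Nf_succ (q := q) (Ξ := Ξ) (b - 1)
      rw [h9, hxb1] at this
      simpa using this
    have hBb : Bf q Ξ b = Bf q Ξ (b - 1) + 1 := by
      have h9 : b - 1 + 1 = b := by omega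
      have := Bf_succ (q := q) (Ξ := Ξ) (k := b - 1) (by omega)
      rw [h9, hxb2, hxb1] at this
      simpa using this
    have hDc : (D : ℤ) = q * (2 * s + 1) + Ξ := Dn_cast hq hqΞ s
    constructor
    · have hNchain : Nf q Ξ b = Nf q Ξ (a - 1) + 1 := by rw [hNb, hNb1, hNa]
      have : (Nf q Ξ b : ℤ) = (Nf q Ξ (a - 1) : ℤ) + 1 := by exact_mod_cast hNchain
      rw [this, hNa1, ihN]
      have haZ : ((a - 1 : ℕ) : ℤ) = (P : ℤ) + (D : ℤ) - 1 := by
        have : a - 1 + 1 = P + D := by omega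
        have := congrArg (fun n : ℕ => (n : ℤ)) this
        push_cast at this
        linarith
      rw [haZ, hDc]
      push_cast
      ring
    · rw [hBb, hBb1, hBa, hBa1, ihB]
      ring

lemma mainNat (hpow : (q : ℝ) + 1 + (Ξ : ℝ) ≤ (2 : ℝ) ^ ((q : ℝ) - 1))
    (s k : ℕ) (h1 : Pn q s ≤ k) (h2 : k < Pn q s + Dn q Ξ s) :
    (Nf q Ξ k : ℤ) = (k : ℤ) - (Pn q s : ℤ) + 1 + q * s ^ 2 + Ξ * s ∧
      Bf q Ξ k = 2 * s + 1 := by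
  obtain ⟨hN0, hB0⟩ := baseI hq hqΞ hpow s
  obtain ⟨hN1, hB1⟩ := inI hq hqΞ k h1 h2
  refine ⟨?_, by rw [hB1, hB0]⟩
  rw [hN1, hN0]; ring

end

end StmtAux


theorem stmt3 (Ξ q : ℤ) (hq : 3 ≤ q) (hqΞ : 1 ≤ q + Ξ)
    (hpow : (q : ℝ) + 1 + (Ξ : ℝ) ≤ (2 : ℝ) ^ ((q : ℝ) - 1)) :
    ∀ s : ℕ, ∀ k : ℕ, (k : ℝ) ∈ Iset q Ξ (s : ℝ) →
      (Nf q Ξ k : ℝ) = (k : ℝ) - ((2 : ℝ) ^ (Qf q (s : ℝ)) - 1)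
          + Qf q (s : ℝ) + (Ξ : ℝ) * (s : ℝ) ∧
      Bf q Ξ k = 2 * s + 1 := by
  intro s k hmem
  rw [StmtAux.mem_Iset_iff hq hqΞ] at hmem
  obtain ⟨h1, h2⟩ := hmem
  obtain ⟨hN, hB⟩ := StmtAux.mainNat hq hqΞ hpow s k h1 h2
  refine ⟨?_, hB⟩
  have hP := StmtAux.two_rpow hq hqΞ (Ξ := Ξ) s
  have hQ : Qf q (s : ℝ) = (q : ℝ) * (s : ℝ) ^ 2 := rfl
  have hNR := congrArg (fun z : ℤ => (z : ℝ)) hN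
  push_cast at hNR
  rw [hP, hQ]
  push_cast
  linarith
end

section
/- For every real number s ≥ 0 and every τ > 0 one has (1/8)·2^((1−τ)·Q(⌊s⌋+1) − τ·(Ξ−2ξ)·(⌊s⌋+1)) ≤ Π(τ, λ(s)). -/
open scoped Classical ENNReal
open Real Set Filter

/-- integer start points -/
def Aexp (q : ℤ) (n : ℕ) : ℕ := 2 ^ (q.toNat * n ^ 2)

def Cc (q Ξ : ℤ) (n : ℕ) : ℕ := ((2 * (n : ℤ) + 1) * q + Ξ).toNat

def Sc (q Ξ : ℤ) (n : ℕ) : ℕ := ∑ s ∈ Finset.range n, Cc q Ξ s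

lemma Qf_nat (q : ℤ) (hq : 0 ≤ q) (n : ℕ) : (2:ℝ) ^ (Qf q (n:ℝ)) = (Aexp q n : ℝ) := by
  have h : Qf q (n:ℝ) = ((q.toNat * n ^ 2 : ℕ) : ℝ) := by
    simp only [Qf]
    have h2 : ((q.toNat : ℕ) : ℝ) = (q:ℝ) := by exact_mod_cast Int.toNat_of_nonneg hq
    push_cast
    rw [h2]
  rw [h, Real.rpow_natCast]
  simp [Aexp]

lemma Cc_int_pos (q Ξ : ℤ) (hq : 3 ≤ q) (hqΞ : 1 ≤ q + Ξ) (n : ℕ) :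
    1 ≤ (2 * (n : ℤ) + 1) * q + Ξ := by
  have hn : (0:ℤ) ≤ (n:ℤ) := Int.natCast_nonneg n
  nlinarith

lemma Cc_cast (q Ξ : ℤ) (hq : 3 ≤ q) (hqΞ : 1 ≤ q + Ξ) (n : ℕ) :
    ((Cc q Ξ n : ℤ)) = (2 * (n : ℤ) + 1) * q + Ξ :=
  Int.toNat_of_nonneg (le_trans zero_le_one (Cc_int_pos q Ξ hq hqΞ n))

lemma Cc_pos (q Ξ : ℤ) (hq : 3 ≤ q) (hqΞ : 1 ≤ q + Ξ) (n : ℕ) : 1 ≤ Cc q Ξ n := by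
  have := Cc_int_pos q Ξ hq hqΞ n
  have := Cc_cast q Ξ hq hqΞ n
  omega

lemma Cc_real (q Ξ : ℤ) (hq : 3 ≤ q) (hqΞ : 1 ≤ q + Ξ) (n : ℕ) :
    (Cc q Ξ n : ℝ) = Qf q ((n:ℝ) + 1) - Qf q (n:ℝ) + (Ξ:ℝ) := by
  have h := Cc_cast q Ξ hq hqΞ n
  have : (Cc q Ξ n : ℝ) = ((2 * (n:ℤ) + 1) * q + Ξ : ℤ) := by exact_mod_cast congrArg (Int.cast : ℤ → ℝ) h
  rw [this]
  simp only [Qf]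
  push_cast
  ring

lemma Sc_cast (q Ξ : ℤ) (hq : 3 ≤ q) (hqΞ : 1 ≤ q + Ξ) (n : ℕ) :
    ((Sc q Ξ n : ℤ)) = q * (n:ℤ) ^ 2 + (n:ℤ) * Ξ := by
  induction n with
  | zero => simp [Sc]
  | succ m ih =>
    have : Sc q Ξ (m+1) = Sc q Ξ m + Cc q Ξ m := by
      simp [Sc, Finset.sum_range_succ]
    rw [this]
    push_cast [Cc_cast q Ξ hq hqΞ m]
    push_cast at ih
    rw [ih]
    ring

lemma key (q Ξ : ℤ) (hq : 3 ≤ q) (hqΞ : 1 ≤ q + Ξ)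
    (hpow : (q : ℝ) + 1 + (Ξ : ℝ) ≤ (2 : ℝ) ^ ((q : ℝ) - 1))
    (s : ℝ) (hs : 0 ≤ s) :
    (2:ℝ) ^ (Qf q s) + (Qf q (s+1) - Qf q s + (Ξ:ℝ)) ≤ (2:ℝ) ^ (Qf q (s+1) - 1) := by
  have hqr : (3:ℝ) ≤ (q:ℝ) := by exact_mod_cast hq
  have hqΞr : (1:ℝ) ≤ (q:ℝ) + (Ξ:ℝ) := by exact_mod_cast hqΞ
  set a := (2:ℝ) ^ (Qf q s) with ha_def
  have hQs : 0 ≤ Qf q s := by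
    simp only [Qf]; positivity
  have ha : 1 ≤ a := Real.one_le_rpow one_le_two hQs
  have hsplit : (2:ℝ) ^ (Qf q (s+1) - 1)
      = a * ((2:ℝ) ^ ((q:ℝ) - 1) * (2:ℝ) ^ (2 * (q:ℝ) * s)) := by
    rw [ha_def, ← Real.rpow_add two_pos, ← Real.rpow_add two_pos]
    congr 1
    simp only [Qf]; ring
  have hE : 1 + (q:ℝ) * s ≤ (2:ℝ) ^ (2 * (q:ℝ) * s) := by
    rw [Real.rpow_def_of_pos two_pos]
    have h1 := Real.add_one_le_exp (Real.log 2 * (2 * (q:ℝ) * s))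
    have hlog : (0.6931471803:ℝ) < Real.log 2 := Real.log_two_gt_d9
    have hqs : 0 ≤ (q:ℝ) * s := by positivity
    nlinarith
  have hP : (q:ℝ) + 1 + (Ξ:ℝ) ≤ (2:ℝ) ^ ((q:ℝ) - 1) := hpow
  set P := (2:ℝ) ^ ((q:ℝ) - 1) with hP_def
  set E := (2:ℝ) ^ (2 * (q:ℝ) * s) with hE_def
  rw [hsplit]
  have hPpos : (2:ℝ) ≤ P := by nlinarith
  have hEpos : (1:ℝ) ≤ E := by nlinarith [mul_nonneg (by linarith : (0:ℝ) ≤ (q:ℝ)) hs]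
  have hQdiff : Qf q (s+1) - Qf q s = (q:ℝ) * (2*s+1) := by
    simp only [Qf]; ring
  rw [hQdiff]
  have hqs : 0 ≤ (q:ℝ) * s := by positivity
  -- a * (P * E) ≥ a*P*(1+qs) ≥ a*(q+1+Ξ) + (q+1+Ξ)*q*s ≥ a + q + Ξ + 2*q*s
  have step1 : a * P * (1 + (q:ℝ)*s) ≤ a * (P * E) := by
    have : a * P * (1 + (q:ℝ)*s) ≤ a * P * E := by
      apply mul_le_mul_of_nonneg_left hE (by nlinarith)
    linarith [this, (by ring : a * P * E = a * (P * E))]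
  have step2 : a * ((q:ℝ)+1+(Ξ:ℝ)) + ((q:ℝ)+1+(Ξ:ℝ)) * ((q:ℝ)*s) ≤ a * P * (1 + (q:ℝ)*s) := by
    have h1 : 0 ≤ a * (P - ((q:ℝ)+1+(Ξ:ℝ))) := mul_nonneg (by linarith) (by linarith)
    have h2 : 0 ≤ (a - 1) * ((q:ℝ)+1+(Ξ:ℝ)) := mul_nonneg (by linarith) (by linarith)
    have h3 : 0 ≤ (a * P - ((q:ℝ)+1+(Ξ:ℝ))) * ((q:ℝ)*s) := by
      apply mul_nonneg _ hqs
      nlinarith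
    nlinarith
  have step3 : a + ((q:ℝ) * (2*s+1) + (Ξ:ℝ)) ≤ a * ((q:ℝ)+1+(Ξ:ℝ)) + ((q:ℝ)+1+(Ξ:ℝ)) * ((q:ℝ)*s) := by
    nlinarith [mul_le_mul_of_nonneg_right ha (by linarith : (0:ℝ) ≤ (q:ℝ)+(Ξ:ℝ))]
  linarith

lemma Aexp_pos (q : ℤ) (n : ℕ) : 1 ≤ Aexp q n := Nat.one_le_two_pow

lemma Aexp_mono (q : ℤ) {n m : ℕ} (h : n ≤ m) : Aexp q n ≤ Aexp q m := by
  apply Nat.pow_le_pow_right (by norm_num)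
  exact Nat.mul_le_mul_left _ (Nat.pow_le_pow_left h 2)

lemma key_nat (q Ξ : ℤ) (hq : 3 ≤ q) (hqΞ : 1 ≤ q + Ξ)
    (hpow : (q : ℝ) + 1 + (Ξ : ℝ) ≤ (2 : ℝ) ^ ((q : ℝ) - 1)) (n : ℕ) :
    2 * (Aexp q n + Cc q Ξ n) ≤ Aexp q (n+1) := by
  have hk := key q Ξ hq hqΞ hpow (n:ℝ) (Nat.cast_nonneg n)
  have h0 : (0:ℤ) ≤ q := by omega
  have hA : (2:ℝ) ^ (Qf q (n:ℝ)) = (Aexp q n : ℝ) := Qf_nat q h0 n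
  have hA1 : (2:ℝ) ^ (Qf q ((n:ℝ)+1)) = (Aexp q (n+1) : ℝ) := by
    have := Qf_nat q h0 (n+1)
    push_cast at this ⊢
    convert this using 3
  have hC := Cc_real q Ξ hq hqΞ n
  have h2 : (2:ℝ) ^ (Qf q ((n:ℝ)+1) - 1) = (Aexp q (n+1) : ℝ) / 2 := by
    rw [Real.rpow_sub two_pos, hA1, Real.rpow_one]
  rw [hA, h2] at hk
  have : ((2 * (Aexp q n + Cc q Ξ n) : ℕ) : ℝ) ≤ ((Aexp q (n+1) : ℕ) : ℝ) := by
    push_cast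
    linarith [hC ▸ hk]
  exact_mod_cast this

lemma lep_lt (q Ξ : ℤ) (hq : 3 ≤ q) (hqΞ : 1 ≤ q + Ξ)
    (hpow : (q : ℝ) + 1 + (Ξ : ℝ) ≤ (2 : ℝ) ^ ((q : ℝ) - 1)) (n : ℕ) :
    Aexp q n + Cc q Ξ n < Aexp q (n+1) := by
  have h1 := key_nat q Ξ hq hqΞ hpow n
  have h2 := Aexp_pos q n
  have h3 := Cc_pos q Ξ hq hqΞ n
  omega

lemma xzero (q Ξ : ℤ) (hq : 3 ≤ q) (hqΞ : 1 ≤ q + Ξ) (n j : ℕ)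
    (h1 : Aexp q n ≤ j + 1) (h2 : j + 1 < Aexp q n + Cc q Ξ n) :
    xseq q Ξ j = 0 := by
  have h0 : (0:ℤ) ≤ q := by omega
  unfold xseq
  rw [if_pos]
  refine ⟨n, ?_, ?_⟩
  · rw [Qf_nat q h0 n]
    exact_mod_cast h1
  · have hC := Cc_real q Ξ hq hqΞ n
    have : ((j:ℝ) + 1) < (Aexp q n : ℝ) + (Cc q Ξ n : ℝ) := by exact_mod_cast h2
    rw [Qf_nat q h0 n]
    linarith

lemma xone (q Ξ : ℤ) (hq : 3 ≤ q) (hqΞ : 1 ≤ q + Ξ)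
    (hpow : (q : ℝ) + 1 + (Ξ : ℝ) ≤ (2 : ℝ) ^ ((q : ℝ) - 1)) (n j : ℕ)
    (h1 : Aexp q n + Cc q Ξ n ≤ j + 1) (h2 : j + 1 < Aexp q (n+1)) :
    xseq q Ξ j = 1 := by
  have h0 : (0:ℤ) ≤ q := by omega
  unfold xseq
  rw [if_neg]
  rintro ⟨t, hlo, hhi⟩
  -- convert to nat inequalities
  have hAt : (2:ℝ) ^ (Qf q (t:ℝ)) = (Aexp q t : ℝ) := Qf_nat q h0 t
  rw [hAt] at hlo
  have hlo' : Aexp q t ≤ j + 1 := by exact_mod_cast hlo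
  have hC := Cc_real q Ξ hq hqΞ t
  rw [hAt] at hhi
  have hhi' : j + 1 < Aexp q t + Cc q Ξ t := by
    have : ((j:ℝ) + 1) < (Aexp q t : ℝ) + (Cc q Ξ t : ℝ) := by linarith
    exact_mod_cast this
  rcases lt_trichotomy t n with ht | rfl | ht
  · have := lep_lt q Ξ hq hqΞ hpow t
    have hm : Aexp q (t+1) ≤ Aexp q n := Aexp_mono q (by omega)
    omega
  · omega
  · have hm : Aexp q (n+1) ≤ Aexp q t := Aexp_mono q (by omega)
    omega

lemma Nf_succ (q Ξ : ℤ) (k : ℕ) :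
    Nf q Ξ (k+1) = Nf q Ξ k + if xseq q Ξ k = 0 then 1 else 0 := by
  unfold Nf
  rw [Finset.range_add_one, Finset.filter_insert]
  split
  · rw [Finset.card_insert_of_notMem (by simp)]
  · simp

lemma Nf_ones (q Ξ : ℤ) (a : ℕ) : ∀ b, a ≤ b →
    (∀ j, a ≤ j → j < b → xseq q Ξ j = 1) → Nf q Ξ b = Nf q Ξ a := by
  intro b
  induction b with
  | zero => intro h _; have ha : a = 0 := by omega
            rw [ha]
  | succ c ih =>
    intro h hx
    rcases Nat.eq_or_lt_of_le h with h' | h'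
    · rw [h']
    · have hc : a ≤ c := by omega
      rw [Nf_succ, hx c hc (by omega)]
      simp [ih hc (fun j hj hj' => hx j hj (by omega))]

lemma Nf_zeros (q Ξ : ℤ) (a : ℕ) : ∀ b, a ≤ b →
    (∀ j, a ≤ j → j < b → xseq q Ξ j = 0) → Nf q Ξ b = Nf q Ξ a + (b - a) := by
  intro b
  induction b with
  | zero => intro h _; have ha : a = 0 := by omega
            subst ha; simp
  | succ c ih =>
    intro h hx
    rcases Nat.eq_or_lt_of_le h with h' | h'
    · rw [h']; omega
    · have hc : a ≤ c := by omega
      rw [Nf_succ, hx c hc (by omega)]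
      rw [ih hc (fun j hj hj' => hx j hj (by omega))]
      simp
      omega

lemma Bf_one (q Ξ : ℤ) : Bf q Ξ 1 = 1 := by simp [Bf]

lemma Bf_succ (q Ξ : ℤ) (k : ℕ) :
    Bf q Ξ (k+2) = Bf q Ξ (k+1) + if xseq q Ξ k ≠ xseq q Ξ (k+1) then 1 else 0 := by
  unfold Bf
  simp only [Nat.add_sub_cancel, Nat.succ_ne_zero, if_false]
  rw [show k + 2 - 1 = k + 1 from rfl, Finset.range_add_one, Finset.filter_insert]
  split
  · rw [Finset.card_insert_of_notMem (by simp)]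
    simp; omega
  · simp

lemma Bf_const (q Ξ : ℤ) (a : ℕ) (ha : 1 ≤ a) : ∀ b, a ≤ b →
    (∀ k, a ≤ k → k < b → xseq q Ξ (k-1) = xseq q Ξ k) → Bf q Ξ b = Bf q Ξ a := by
  intro b
  induction b with
  | zero => intro h _; omega
  | succ c ih =>
    intro h hx
    rcases Nat.eq_or_lt_of_le h with h' | h'
    · rw [h']
    · have hc : a ≤ c := by omega
      obtain ⟨d, rfl⟩ : ∃ d, c = d + 1 := ⟨c - 1, by omega⟩
      rw [Bf_succ]
      have he : xseq q Ξ (d + 1 - 1) = xseq q Ξ (d + 1) := hx (d+1) (by omega) (by omega)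
      simp only [show d + 1 - 1 = d from rfl] at he
      rw [he]
      simp [ih hc (fun k hk hk' => hx k hk (by omega))]

lemma endpoint (q Ξ : ℤ) (hq : 3 ≤ q) (hqΞ : 1 ≤ q + Ξ)
    (hpow : (q : ℝ) + 1 + (Ξ : ℝ) ≤ (2 : ℝ) ^ ((q : ℝ) - 1)) :
    ∀ n, Nf q Ξ (Aexp q n + Cc q Ξ n) = Sc q Ξ (n+1)
      ∧ Bf q Ξ (Aexp q n + Cc q Ξ n) = 2*n+2 := by
  intro n
  induction n with
  | zero =>
    have hA0 : Aexp q 0 = 1 := by simp [Aexp]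
    have hC0 : 1 ≤ Cc q Ξ 0 := Cc_pos q Ξ hq hqΞ 0
    have hlt : Aexp q 0 + Cc q Ξ 0 < Aexp q 1 := lep_lt q Ξ hq hqΞ hpow 0
    rw [hA0] at hlt ⊢
    obtain ⟨c, hc⟩ : ∃ c, Cc q Ξ 0 = c + 1 := ⟨Cc q Ξ 0 - 1, by omega⟩
    rw [hc] at hlt ⊢
    have hzeros : ∀ j, 0 ≤ j → j < c + 1 → xseq q Ξ j = 0 := by
      intro j hj hj'
      exact xzero q Ξ hq hqΞ 0 j (by rw [hA0]; omega) (by rw [hA0, hc]; omega)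
    have hxlast : xseq q Ξ (c+1) = 1 :=
      xone q Ξ hq hqΞ hpow 0 (c+1) (by rw [hA0, hc]; omega) (by simp only [zero_add]; omega)
    constructor
    · have h1 : Nf q Ξ (c+1) = Nf q Ξ 0 + (c+1-0) := Nf_zeros q Ξ 0 (c+1) (by omega) hzeros
      have h0 : Nf q Ξ 0 = 0 := by simp [Nf]
      have h2 : Nf q Ξ (1+(c+1)) = Nf q Ξ (c+1+1) := by ring_nf
      rw [h2, Nf_succ, hxlast, h1, h0]
      have : Sc q Ξ 1 = Cc q Ξ 0 := by simp [Sc]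
      rw [this, hc]
      simp
    · have hB1 : Bf q Ξ (c+1) = Bf q Ξ 1 := by
        apply Bf_const q Ξ 1 le_rfl (c+1) (by omega)
        intro k hk hk'
        rw [hzeros (k-1) (by omega) (by omega), hzeros k (by omega) (by omega)]
      have h2 : (1+(c+1)) = c + 2 := by omega
      rw [h2]
      rw [show c + 2 = c + 2 from rfl, Bf_succ]
      rw [hzeros c (by omega) (by omega), hxlast, hB1, Bf_one]
      simp
  | succ n ih =>
    obtain ⟨hN, hB⟩ := ih
    have hlep1 : 2 ≤ Aexp q n + Cc q Ξ n := by
      have := Aexp_pos q n; have := Cc_pos q Ξ hq hqΞ n; omega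
    have hlt : Aexp q n + Cc q Ξ n < Aexp q (n+1) := lep_lt q Ξ hq hqΞ hpow n
    have hlt2 : Aexp q (n+1) + Cc q Ξ (n+1) < Aexp q (n+1+1) := lep_lt q Ξ hq hqΞ hpow (n+1)
    obtain ⟨d, hd⟩ : ∃ d, Aexp q (n+1) = d + 2 := ⟨Aexp q (n+1) - 2, by omega⟩
    obtain ⟨c, hcc⟩ : ∃ c, Cc q Ξ (n+1) = c + 1 := ⟨Cc q Ξ (n+1) - 1, by have := Cc_pos q Ξ hq hqΞ (n+1); omega⟩
    set lep := Aexp q n + Cc q Ξ n with hlep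
    have hones : ∀ j, lep ≤ j → j < d+1 → xseq q Ξ j = 1 := by
      intro j hj hj'
      exact xone q Ξ hq hqΞ hpow n j (by omega) (by omega)
    have hzeros : ∀ j, d+1 ≤ j → j < d+2+c → xseq q Ξ j = 0 := by
      intro j hj hj'
      exact xzero q Ξ hq hqΞ (n+1) j (by omega) (by omega)
    have hxlast : xseq q Ξ (d+2+c) = 1 := by
      apply xone q Ξ hq hqΞ hpow (n+1) (d+2+c) (by omega) (by omega)
    have hNd : Nf q Ξ (d+1) = Sc q Ξ (n+1) := by
      rw [Nf_ones q Ξ lep (d+1) (by omega) hones, hN]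
    have hNz : Nf q Ξ (d+2+c) = Sc q Ξ (n+1) + (c+1) := by
      rw [Nf_zeros q Ξ (d+1) (d+2+c) (by omega) hzeros, hNd]
      congr 1
      omega
    have hScc : Sc q Ξ (n+1+1) = Sc q Ξ (n+1) + Cc q Ξ (n+1) := by
      simp [Sc, Finset.sum_range_succ]
    constructor
    · rw [hd, hcc, show d + 2 + (c + 1) = (d+2+c) + 1 from by omega, Nf_succ, hxlast, hNz, hScc, hcc]
      simp
    · have hBd : Bf q Ξ (d+1) = 2*n+2 := by
        rw [Bf_const q Ξ lep (by omega) (d+1) (by omega) ?_, hB]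
        intro k hk hk'
        have h1 : xseq q Ξ (k-1) = 1 := by
          have := xone q Ξ hq hqΞ hpow n (k-1) (by omega) (by omega)
          convert this using 2
        rw [h1, hones k hk (by omega)]
      have hB2 : Bf q Ξ (d+2) = 2*n+3 := by
        rw [Bf_succ, xone q Ξ hq hqΞ hpow n d (by omega) (by omega), hzeros (d+1) (by omega) (by omega), hBd]
        simp
      have hB3 : Bf q Ξ (d+2+c) = 2*n+3 := by
        rw [Bf_const q Ξ (d+2) (by omega) (d+2+c) (by omega) ?_, hB2]
        intro k hk hk'
        rw [hzeros (k-1) (by omega) (by omega), hzeros k (by omega) (by omega)]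
      rw [hd, hcc, show d + 2 + (c + 1) = (d+c+1) + 2 from by omega, Bf_succ,
        show d + c + 1 + 1 = d + 2 + c from by omega, hB3,
        hzeros (d+c+1) (by omega) (by omega), hxlast]
      simp
      omega

lemma plateau (q Ξ : ℤ) (hq : 3 ≤ q) (hqΞ : 1 ≤ q + Ξ)
    (hpow : (q : ℝ) + 1 + (Ξ : ℝ) ≤ (2 : ℝ) ^ ((q : ℝ) - 1))
    (n k : ℕ) (h1 : Aexp q n + Cc q Ξ n ≤ k) (h2 : k < Aexp q (n+1)) :
    Nf q Ξ k = Sc q Ξ (n+1) ∧ Bf q Ξ k = 2*n+2 := by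
  obtain ⟨hN, hB⟩ := endpoint q Ξ hq hqΞ hpow n
  have hlep1 : 2 ≤ Aexp q n + Cc q Ξ n := by
    have := Aexp_pos q n; have := Cc_pos q Ξ hq hqΞ n; omega
  constructor
  · rw [Nf_ones q Ξ (Aexp q n + Cc q Ξ n) k h1 ?_, hN]
    intro j hj hj'
    exact xone q Ξ hq hqΞ hpow n j (by omega) (by omega)
  · rw [Bf_const q Ξ (Aexp q n + Cc q Ξ n) (by omega) k h1 ?_, hB]
    intro j hj hj'
    rw [xone q Ξ hq hqΞ hpow n (j-1) (by omega) (by omega),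
      xone q Ξ hq hqΞ hpow n j (by omega) (by omega)]

theorem stmt6 (Ξ q : ℤ) (hq : 3 ≤ q) (hqΞ : 1 ≤ q + Ξ)
    (hpow : (q : ℝ) + 1 + (Ξ : ℝ) ≤ (2 : ℝ) ^ ((q : ℝ) - 1))
    (ξ : ℝ) (hξ1 : 1 ≤ (Ξ : ℝ) - 2 * ξ) (hξ2 : (Ξ : ℝ) - 2 * ξ ≤ 2) :
    ∀ s : ℝ, 0 ≤ s → ∀ τ : ℝ, 0 < τ →
      ENNReal.ofReal ((1 / 8) * (2 : ℝ) ^ ((1 - τ) * Qf q ((Nat.floor s : ℝ) + 1)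
          - τ * ((Ξ : ℝ) - 2 * ξ) * ((Nat.floor s : ℝ) + 1))) ≤
        Pi2 q Ξ ξ τ (lamf q Ξ s) := by
  intro s hs τ hτ
  have h0 : (0:ℤ) ≤ q := by omega
  have hq0 : (0:ℝ) ≤ (q:ℝ) := by exact_mod_cast h0
  set n := Nat.floor s with hn
  set L := Aexp q n + Cc q Ξ n with hL
  set R := Aexp q (n+1) with hR
  set QM := Qf q ((n:ℝ) + 1) with hQM
  -- basic size facts
  have hLR : 2 * L ≤ R := key_nat q Ξ hq hqΞ hpow n
  have hL2 : 2 ≤ L := by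
    have := Aexp_pos q n; have := Cc_pos q Ξ hq hqΞ n; omega
  have hRreal : ((R:ℕ):ℝ) = (2:ℝ) ^ QM := by
    rw [hQM, hR]
    rw [show ((n:ℝ) + 1) = (((n+1:ℕ)):ℝ) by push_cast; ring]
    rw [Qf_nat q h0 (n+1)]
  -- monotonicity of Q
  have hfl : (n:ℝ) ≤ s := Nat.floor_le hs
  have hQs1 : QM ≤ Qf q (s+1) := by
    rw [hQM]; simp only [Qf]
    have h2 : ((n:ℝ)+1)^2 ≤ (s+1)^2 := by nlinarith
    nlinarith
  -- lambda bounds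
  have hkey := key q Ξ hq hqΞ hpow s hs
  have hhalf : (2:ℝ) ^ (Qf q (s+1)) = 2 * (2:ℝ) ^ (Qf q (s+1) - 1) := by
    rw [Real.rpow_sub two_pos, Real.rpow_one]; ring
  have hJ : (2:ℝ) ^ (Qf q (s+1) - 1) ≤ Jlen q Ξ s := by
    unfold Jlen
    linarith [hkey, hhalf]
  have hJpos : 0 < Jlen q Ξ s := lt_of_lt_of_le (Real.rpow_pos_of_pos two_pos _) hJ
  have hlam0 : 0 ≤ lamf q Ξ s := by unfold lamf; positivity
  have hlamR : lamf q Ξ s * ((R:ℕ):ℝ) ≤ 2 := by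
    unfold lamf
    rw [div_mul_eq_mul_div, one_mul, div_le_iff₀ hJpos]
    have h3 : ((R:ℕ):ℝ) ≤ (2:ℝ) ^ (Qf q (s+1)) := by
      rw [hRreal]
      exact Real.rpow_le_rpow_of_exponent_le one_le_two hQs1
    linarith [hJ, hhalf]
  -- the comparison series
  set bexp := -2 - τ * ((Sc q Ξ (n+1) : ℕ):ℝ) + τ * ξ * (((2*n+2 : ℕ)):ℝ) with hbexp
  have hterm : ∀ k ∈ Finset.Ico L R, (2:ℝ) ^ bexp ≤
      (2:ℝ) ^ (-lamf q Ξ s * (k : ℝ) - τ * (Nf q Ξ k : ℝ) + τ * ξ * (Bf q Ξ k : ℝ)) := by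
    intro k hk
    obtain ⟨hk1, hk2⟩ := Finset.mem_Ico.mp hk
    obtain ⟨hNk, hBk⟩ := plateau q Ξ hq hqΞ hpow n k hk1 hk2
    rw [hNk, hBk]
    apply Real.rpow_le_rpow_of_exponent_le one_le_two
    have hkR : (k:ℝ) ≤ ((R:ℕ):ℝ) := by exact_mod_cast le_of_lt hk2
    have : lamf q Ξ s * (k:ℝ) ≤ 2 := by
      calc lamf q Ξ s * (k:ℝ) ≤ lamf q Ξ s * ((R:ℕ):ℝ) :=
            mul_le_mul_of_nonneg_left hkR hlam0
        _ ≤ 2 := hlamR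
    rw [hbexp]
    push_cast
    push_cast at this ⊢
    nlinarith
  have hsum := Finset.card_nsmul_le_sum (Finset.Ico L R)
      (fun k => (2:ℝ) ^ (-lamf q Ξ s * (k : ℝ) - τ * (Nf q Ξ k : ℝ) + τ * ξ * (Bf q Ξ k : ℝ)))
      ((2:ℝ) ^ bexp) hterm
  rw [Nat.card_Ico, nsmul_eq_mul] at hsum
  -- real chain
  have hcast : (((R - L : ℕ)):ℝ) = ((R:ℕ):ℝ) - ((L:ℕ):ℝ) := by
    have : L ≤ R := by omega
    push_cast [this]; ring
  have hLhalf : ((L:ℕ):ℝ) ≤ ((R:ℕ):ℝ) / 2 := by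
    have : ((2*L : ℕ):ℝ) ≤ ((R:ℕ):ℝ) := by exact_mod_cast hLR
    push_cast at this; linarith
  have hSc : ((Sc q Ξ (n+1) : ℕ):ℝ) = QM + ((n:ℝ)+1) * (Ξ:ℝ) := by
    have h := Sc_cast q Ξ hq hqΞ (n+1)
    have h2 : ((Sc q Ξ (n+1) : ℕ):ℝ) = ((q * ((n+1:ℕ):ℤ)^2 + ((n+1:ℕ):ℤ) * Ξ : ℤ):ℝ) := by
      exact_mod_cast congrArg (Int.cast : ℤ → ℝ) h
    rw [h2, hQM]
    simp only [Qf]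
    push_cast
    ring
  set texp := (1 - τ) * QM - τ * ((Ξ : ℝ) - 2 * ξ) * ((n : ℝ) + 1) with htexp
  have hbeq : bexp = -2 - τ * QM - τ * ((Ξ:ℝ) - 2*ξ) * ((n:ℝ)+1) := by
    rw [hbexp, hSc]
    push_cast
    ring
  have hfinal : (1/8) * (2:ℝ) ^ texp ≤ (((R - L : ℕ)):ℝ) * (2:ℝ) ^ bexp := by
    have hQb : QM + bexp = texp - 2 := by rw [hbeq, htexp]; ring
    have h1 : (1/8) * (2:ℝ) ^ texp = ((2:ℝ) ^ QM / 2) * (2:ℝ) ^ bexp := by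
      have h4 : (2:ℝ) ^ (2:ℝ) = 4 := by
        rw [show (2:ℝ) = ((2:ℕ):ℝ) by norm_num, Real.rpow_natCast]
        norm_num
      have hmul : (2:ℝ)^QM * (2:ℝ)^bexp = (2:ℝ)^texp / 4 := by
        rw [← Real.rpow_add two_pos, hQb, Real.rpow_sub two_pos, h4]
      calc (1:ℝ)/8 * 2^texp = ((2:ℝ)^texp/4)/2 := by ring
        _ = ((2:ℝ)^QM * (2:ℝ)^bexp)/2 := by rw [hmul]
        _ = (2:ℝ)^QM/2 * (2:ℝ)^bexp := by ring
    rw [h1, hcast]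
    apply mul_le_mul_of_nonneg_right _ (le_of_lt (Real.rpow_pos_of_pos two_pos _))
    rw [← hRreal]
    linarith
  -- ENNReal chain
  unfold Pi2
  refine le_trans ?_ (ENNReal.sum_le_tsum (Finset.Ico L R))
  rw [← ENNReal.ofReal_sum_of_nonneg (fun k _ => le_of_lt (Real.rpow_pos_of_pos two_pos _))]
  apply ENNReal.ofReal_le_ofReal
  calc (1 / 8) * (2 : ℝ) ^ ((1 - τ) * Qf q ((Nat.floor s : ℝ) + 1)
          - τ * ((Ξ : ℝ) - 2 * ξ) * ((Nat.floor s : ℝ) + 1))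
      = (1/8) * (2:ℝ) ^ texp := by rw [htexp, hQM]
    _ ≤ (((R - L : ℕ)):ℝ) * (2:ℝ) ^ bexp := hfinal
    _ ≤ _ := hsum
end
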